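/- Let K be a convex body in R^d and λ > 0. Suppose the witness set A_K^λ = {u ∈ S^{d-1} : width_K(u) ≤ λ} cannot be covered by a zone of half-width less than ω. Then the diameter of K is at most λ/ω. -/
import Mathlib


open scoped RealInnerProductSpace

/-- The width of a set `K` in direction `u`. -/
noncomputable def widthIn {d : ℕ} (K : Set (EuclideanSpace ℝ (Fin d)))
    (u : EuclideanSpace ℝ (Fin d)) : ℝ :=
  sSup ((fun x => (⟪x, u⟫ : ℝ)) '' K) - sInf ((fun x => (⟪x, u⟫ : ℝ)) '' K)

lemma abs_inner_sub_le_widthIn {d : ℕ} {K : Set (EuclideanSpace ℝ (Fin d))}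
    (hKc : IsCompact K) {p q : EuclideanSpace ℝ (Fin d)} (hp : p ∈ K) (hq : q ∈ K)
    (u : EuclideanSpace ℝ (Fin d)) : |(⟪p - q, u⟫ : ℝ)| ≤ widthIn K u := by
  have hcont : Continuous fun x : EuclideanSpace ℝ (Fin d) => (⟪x, u⟫ : ℝ) :=
    Continuous.inner continuous_id continuous_const
  have himg := hKc.image hcont
  have hbddA : BddAbove ((fun x => (⟪x, u⟫ : ℝ)) '' K) := himg.bddAbove
  have hbddB : BddBelow ((fun x => (⟪x, u⟫ : ℝ)) '' K) := himg.bddBelow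
  have key : ∀ a ∈ K, ∀ b ∈ K, (⟪a, u⟫ : ℝ) - ⟪b, u⟫ ≤ widthIn K u := by
    intro a ha b hb
    have h1 : (⟪a, u⟫ : ℝ) ≤ sSup ((fun x => (⟪x, u⟫ : ℝ)) '' K) :=
      le_csSup hbddA ⟨a, ha, rfl⟩
    have h2 : sInf ((fun x => (⟪x, u⟫ : ℝ)) '' K) ≤ ⟪b, u⟫ :=
      csInf_le hbddB ⟨b, hb, rfl⟩
    unfold widthIn; linarith
  rw [abs_le]
  constructor
  · have := key q hq p hp
    rw [inner_sub_left]; linarith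
  · have := key p hp q hq
    rw [inner_sub_left]; linarith

/-- If the witness set `A_K^λ = {u ∈ S^{d-1} : width_K(u) ≤ λ}` of a convex body `K`
cannot be covered by a zone of half-width less than `ω`, then `diam K ≤ λ/ω`. -/
theorem diam_via_width_of_witness_set (d : ℕ) (K : Set (EuclideanSpace ℝ (Fin d)))
    (hK : Convex ℝ K) (hKc : IsCompact K) (hKi : (interior K).Nonempty)
    (lam ω : ℝ) (hlam : 0 < lam) (hω : 0 < ω)
    (hcov : ∀ x : EuclideanSpace ℝ (Fin d), ‖x‖ = 1 → ∀ ω' : ℝ, ω' < ω →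
      ¬ ({u : EuclideanSpace ℝ (Fin d) | ‖u‖ = 1 ∧ widthIn K u ≤ lam} ⊆
          {u : EuclideanSpace ℝ (Fin d) | ‖u‖ = 1 ∧ |(⟪u, x⟫ : ℝ)| ≤ ω'})) :
    Metric.diam K ≤ lam / ω := by
  apply Metric.diam_le_of_forall_dist_le (by positivity)
  intro p hp q hq
  rcases eq_or_ne p q with rfl | hne
  · simp; positivity
  have hnorm : 0 < ‖p - q‖ := by
    rw [norm_pos_iff]; exact sub_ne_zero_of_ne hne
  rw [dist_eq_norm]
  set x : EuclideanSpace ℝ (Fin d) := ‖p - q‖⁻¹ • (p - q) with hx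
  have hxnorm : ‖x‖ = 1 := by
    rw [hx, norm_smul, norm_inv, norm_norm, inv_mul_cancel₀ hnorm.ne']
  have key : ω ≤ lam / ‖p - q‖ := by
    apply le_of_forall_lt
    intro c hc
    obtain ⟨u, huA, huB⟩ := Set.not_subset.mp (hcov x hxnorm c hc)
    obtain ⟨hu1, huw⟩ := huA
    have hcu : c < |(⟪u, x⟫ : ℝ)| := by
      by_contra h
      exact huB ⟨hu1, le_of_not_gt h⟩
    have hw : |(⟪u, p - q⟫ : ℝ)| ≤ lam := by
      calc |(⟪u, p - q⟫ : ℝ)| = |(⟪p - q, u⟫ : ℝ)| := by rw [real_inner_comm]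
        _ ≤ widthIn K u := abs_inner_sub_le_widthIn hKc hp hq u
        _ ≤ lam := huw
    have hix : |(⟪u, x⟫ : ℝ)| = ‖p - q‖⁻¹ * |(⟪u, p - q⟫ : ℝ)| := by
      rw [hx, real_inner_smul_right, abs_mul, abs_of_pos (inv_pos.mpr hnorm)]
    calc c < |(⟪u, x⟫ : ℝ)| := hcu
      _ = ‖p - q‖⁻¹ * |(⟪u, p - q⟫ : ℝ)| := hix
      _ ≤ ‖p - q‖⁻¹ * lam := by
          apply mul_le_mul_of_nonneg_left hw (inv_nonneg.mpr hnorm.le)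
      _ = lam / ‖p - q‖ := by rw [inv_mul_eq_div]
  rw [le_div_iff₀ hnorm] at key
  rw [le_div_iff₀ hω]
  linarith [key]
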